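/- (Extension of Theorem 1 stated in the paper) In the IRS-aided wireless-powered MEC system where a single static IRS beamforming vector is used for the entire frame, TDMA offloading and NOMA offloading achieve the same optimal computation rate: R_TDMA^1 = R_NOMA^1. -/

import Mathlib

open Finset

/-- Effective channel power gain of device `k` under IRS beamforming vector `v`. -/
noncomputable def gain {K N : ℕ} (h : Fin K → ℂ) (q : Fin K → Fin N → ℂ)
    (k : Fin K) (v : Fin N → ℂ) : ℝ :=
  ‖(starRingEnd ℂ) (h k) + ∑ n, (starRingEnd ℂ) (q k n) * v n‖ ^ 2

/-- Optimal computation rate of TDMA offloading with one static IRS beamforming vector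
(Case 1). -/
noncomputable def RTDMA1 {K N : ℕ} (h : Fin K → ℂ) (q : Fin K → Fin N → ℂ)
    (B T C γ η P σ2 : ℝ) : ℝ :=
  sSup {r : ℝ | ∃ (v₀ : Fin N → ℂ) (τ₀ : ℝ) (τ p f : Fin K → ℝ),
    (∀ n, ‖v₀ n‖ = 1) ∧ 0 ≤ τ₀ ∧ (∀ k, 0 ≤ τ k) ∧
    (∀ k, 0 ≤ p k) ∧ (∀ k, 0 ≤ f k) ∧ τ₀ + ∑ k, τ k ≤ T ∧
    (∀ k, τ k * p k + T * γ * f k ^ 3 ≤ τ₀ * η * P * gain h q k v₀) ∧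
    r = B * ∑ k, τ k * Real.logb 2 (1 + p k * gain h q k v₀ / σ2) + ∑ k, T * f k / C}

/-- Optimal computation rate of NOMA offloading with one static IRS beamforming vector
(Case 1). -/
noncomputable def RNOMA1 {K N : ℕ} (h : Fin K → ℂ) (q : Fin K → Fin N → ℂ)
    (B T C γ η P σ2 : ℝ) : ℝ :=
  sSup {r : ℝ | ∃ (v₀ : Fin N → ℂ) (τ₀ τ₁ : ℝ) (p f : Fin K → ℝ),
    (∀ n, ‖v₀ n‖ = 1) ∧ 0 ≤ τ₀ ∧ 0 ≤ τ₁ ∧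
    (∀ k, 0 ≤ p k) ∧ (∀ k, 0 ≤ f k) ∧ τ₀ + τ₁ ≤ T ∧
    (∀ k, τ₁ * p k + T * γ * f k ^ 3 ≤ τ₀ * η * P * gain h q k v₀) ∧
    r = B * τ₁ * Real.logb 2 (1 + (∑ k, p k * gain h q k v₀) / σ2) + ∑ k, T * f k / C}

/-- The TDMA feasible-value set. -/
def TSet {K N : ℕ} (h : Fin K → ℂ) (q : Fin K → Fin N → ℂ)
    (B T C γ η P σ2 : ℝ) : Set ℝ :=
  {r : ℝ | ∃ (v₀ : Fin N → ℂ) (τ₀ : ℝ) (τ p f : Fin K → ℝ),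
    (∀ n, ‖v₀ n‖ = 1) ∧ 0 ≤ τ₀ ∧ (∀ k, 0 ≤ τ k) ∧
    (∀ k, 0 ≤ p k) ∧ (∀ k, 0 ≤ f k) ∧ τ₀ + ∑ k, τ k ≤ T ∧
    (∀ k, τ k * p k + T * γ * f k ^ 3 ≤ τ₀ * η * P * gain h q k v₀) ∧
    r = B * ∑ k, τ k * Real.logb 2 (1 + p k * gain h q k v₀ / σ2) + ∑ k, T * f k / C}

/-- The NOMA feasible-value set. -/
def NSet {K N : ℕ} (h : Fin K → ℂ) (q : Fin K → Fin N → ℂ)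
    (B T C γ η P σ2 : ℝ) : Set ℝ :=
  {r : ℝ | ∃ (v₀ : Fin N → ℂ) (τ₀ τ₁ : ℝ) (p f : Fin K → ℝ),
    (∀ n, ‖v₀ n‖ = 1) ∧ 0 ≤ τ₀ ∧ 0 ≤ τ₁ ∧
    (∀ k, 0 ≤ p k) ∧ (∀ k, 0 ≤ f k) ∧ τ₀ + τ₁ ≤ T ∧
    (∀ k, τ₁ * p k + T * γ * f k ^ 3 ≤ τ₀ * η * P * gain h q k v₀) ∧
    r = B * τ₁ * Real.logb 2 (1 + (∑ k, p k * gain h q k v₀) / σ2) + ∑ k, T * f k / C}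

lemma gain_nonneg {K N : ℕ} (h : Fin K → ℂ) (q : Fin K → Fin N → ℂ)
    (k : Fin K) (v : Fin N → ℂ) : 0 ≤ gain h q k v := sq_nonneg _

lemma jensen_logb {K : ℕ} (τ x : Fin K → ℝ) (hτ : ∀ k, 0 ≤ τ k) (hx : ∀ k, 0 ≤ x k)
    (hs : 0 < ∑ k, τ k) :
    ∑ k, τ k * Real.logb 2 (1 + x k) ≤
      (∑ k, τ k) * Real.logb 2 (1 + (∑ k, τ k * x k) / (∑ k, τ k)) := by
  set s := ∑ k, τ k with hsdef
  have hJ := (strictConcaveOn_log_Ioi.concaveOn).le_map_sum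
    (t := Finset.univ) (w := fun k => τ k / s) (p := fun k => 1 + x k)
    (fun k _ => div_nonneg (hτ k) hs.le)
    (by rw [← Finset.sum_div]; field_simp; exact hsdef.symm)
    (fun k _ => by have := hx k; simp only [Set.mem_Ioi]; linarith)
  simp only [smul_eq_mul] at hJ
  have hz : ∑ k, τ k / s * (1 + x k) = 1 + (∑ k, τ k * x k) / s := by
    have : ∀ k : Fin K, τ k / s * (1 + x k) = τ k / s + (τ k * x k) / s := fun k => by ring
    rw [Finset.sum_congr rfl (fun k _ => this k), Finset.sum_add_distrib,
      ← Finset.sum_div, ← Finset.sum_div, ← hsdef, div_self hs.ne']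
  rw [hz] at hJ
  have hlog2 : (0:ℝ) < Real.log 2 := Real.log_pos one_lt_two
  have key : ∑ k, τ k * Real.log (1 + x k) ≤ s * Real.log (1 + (∑ k, τ k * x k) / s) := by
    calc ∑ k, τ k * Real.log (1 + x k)
        = s * ∑ k, τ k / s * Real.log (1 + x k) := by
          rw [Finset.mul_sum]
          exact Finset.sum_congr rfl fun k _ => by field_simp
      _ ≤ s * Real.log (1 + (∑ k, τ k * x k) / s) := by
          exact mul_le_mul_of_nonneg_left hJ hs.le
  simp only [Real.logb]
  calc ∑ k, τ k * (Real.log (1 + x k) / Real.log 2)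
      = (∑ k, τ k * Real.log (1 + x k)) / Real.log 2 := by
        rw [Finset.sum_div]; exact Finset.sum_congr rfl fun k _ => by ring
    _ ≤ (s * Real.log (1 + (∑ k, τ k * x k) / s)) / Real.log 2 := by
        exact div_le_div_of_nonneg_right key hlog2.le
    _ = s * (Real.log (1 + (∑ k, τ k * x k) / s) / Real.log 2) := by ring

/-- Every NOMA-achievable value is TDMA-achievable. -/
lemma noma_subset_tdma {K N : ℕ} (h : Fin K → ℂ) (q : Fin K → Fin N → ℂ)
    (B T C γ η P σ2 : ℝ) (hσ : 0 < σ2) :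
    NSet h q B T C γ η P σ2 ⊆ TSet h q B T C γ η P σ2 := by
  rintro r ⟨v₀, τ₀, τ₁, p, f, hv, hτ₀, hτ₁, hp, hf, hbud, hen, hreq⟩
  have hg : ∀ k, 0 ≤ gain h q k v₀ := fun k => gain_nonneg h q k v₀
  set S : ℝ := ∑ k, p k * gain h q k v₀ with hSdef
  have hS : 0 ≤ S := Finset.sum_nonneg fun k _ => mul_nonneg (hp k) (hg k)
  have hp'nn : ∀ k, (0:ℝ) ≤ if gain h q k v₀ = 0 then 0 else S / gain h q k v₀ := by
    intro k; split
    · exact le_rfl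
    · exact div_nonneg hS (hg k)
  refine ⟨v₀, τ₀, fun k => τ₁ * (p k * gain h q k v₀) / S,
    fun k => if gain h q k v₀ = 0 then 0 else S / gain h q k v₀, f, hv, hτ₀,
    fun k => div_nonneg (mul_nonneg hτ₁ (mul_nonneg (hp k) (hg k))) hS,
    hp'nn, hf, ?_, ?_, ?_⟩
  · -- budget
    dsimp only
    have hsum : ∑ k, τ₁ * (p k * gain h q k v₀) / S = τ₁ * S / S := by
      rw [← Finset.sum_div, ← Finset.mul_sum, ← hSdef]
    rw [hsum]
    rcases eq_or_lt_of_le hS with hS0 | hSpos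
    · rw [← hS0]
      simp only [mul_zero, zero_div, add_zero]
      linarith
    · rw [mul_div_assoc, div_self hSpos.ne', mul_one]; exact hbud
  · -- energy
    intro k
    dsimp only
    have hE := hen k
    have hle : τ₁ * (p k * gain h q k v₀) / S *
        (if gain h q k v₀ = 0 then 0 else S / gain h q k v₀) ≤ τ₁ * p k := by
      by_cases hgk : gain h q k v₀ = 0
      · rw [if_pos hgk, mul_zero]
        exact mul_nonneg hτ₁ (hp k)
      · rw [if_neg hgk]
        by_cases hS0 : S = 0
        · rw [hS0, div_zero, zero_mul]
          exact mul_nonneg hτ₁ (hp k)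
        · have : τ₁ * (p k * gain h q k v₀) / S * (S / gain h q k v₀) = τ₁ * p k := by
            field_simp
          rw [this]
    linarith
  · -- rate value
    dsimp only
    have heq : (∑ k, τ₁ * (p k * gain h q k v₀) / S *
        Real.logb 2 (1 + (if gain h q k v₀ = 0 then 0 else S / gain h q k v₀) *
          gain h q k v₀ / σ2))
        = τ₁ * Real.logb 2 (1 + S / σ2) := by
      by_cases hS0 : S = 0
      · rw [Finset.sum_eq_zero fun k _ => by rw [hS0]; simp, hS0]
        simp
      · have hSpos : 0 < S := lt_of_le_of_ne hS (Ne.symm hS0)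
        have step : ∀ k : Fin K, τ₁ * (p k * gain h q k v₀) / S *
            Real.logb 2 (1 + (if gain h q k v₀ = 0 then 0 else S / gain h q k v₀) *
              gain h q k v₀ / σ2)
            = (p k * gain h q k v₀) * (τ₁ * Real.logb 2 (1 + S / σ2) / S) := by
          intro k
          by_cases hgk : gain h q k v₀ = 0
          · simp [hgk]
          · rw [if_neg hgk, div_mul_cancel₀ _ hgk]; ring
        rw [Finset.sum_congr rfl fun k _ => step k, ← Finset.sum_mul, ← hSdef,
          mul_comm, div_mul_cancel₀ _ hS0]
    rw [hreq, heq]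
    ring

/-- Every TDMA-achievable value is dominated by a NOMA-achievable value. -/
lemma tdma_le_noma {K N : ℕ} (h : Fin K → ℂ) (q : Fin K → Fin N → ℂ)
    (B T C γ η P σ2 : ℝ) (hB : 0 < B) (hσ : 0 < σ2) :
    ∀ r ∈ TSet h q B T C γ η P σ2, ∃ r' ∈ NSet h q B T C γ η P σ2, r ≤ r' := by
  rintro r ⟨v₀, τ₀, τ, p, f, hv, hτ₀, hτ, hp, hf, hbud, hen, hreq⟩
  have hg : ∀ k, 0 ≤ gain h q k v₀ := fun k => gain_nonneg h q k v₀
  set τ₁ : ℝ := ∑ k, τ k with hτ₁def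
  have hτ₁ : 0 ≤ τ₁ := Finset.sum_nonneg fun k _ => hτ k
  set p' : Fin K → ℝ := fun k => τ k * p k / τ₁ with hp'def
  refine ⟨B * τ₁ * Real.logb 2 (1 + (∑ k, p' k * gain h q k v₀) / σ2) + ∑ k, T * f k / C,
    ⟨v₀, τ₀, τ₁, p', f, hv, hτ₀, hτ₁,
      fun k => div_nonneg (mul_nonneg (hτ k) (hp k)) hτ₁,
      hf, hbud, ?_, rfl⟩, ?_⟩
  · -- energy
    intro k
    have hE := hen k
    have hle : τ₁ * p' k ≤ τ k * p k := by
      by_cases h0 : τ₁ = 0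
      · simp only [hp'def, h0, div_zero, mul_zero]
        exact mul_nonneg (hτ k) (hp k)
      · rw [hp'def, mul_comm, div_mul_cancel₀ _ h0]
    linarith
  · -- r ≤ r'
    rw [hreq]
    have key : ∑ k, τ k * Real.logb 2 (1 + p k * gain h q k v₀ / σ2)
        ≤ τ₁ * Real.logb 2 (1 + (∑ k, p' k * gain h q k v₀) / σ2) := by
      rcases eq_or_lt_of_le hτ₁ with h0 | hpos
      · have h0' : τ₁ = 0 := h0.symm
        have hsum0 : ∑ k, τ k = 0 := by rw [← hτ₁def]; exact h0'
        have hall : ∀ k, τ k = 0 := by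
          intro k
          have h1 := Finset.single_le_sum (f := τ) (fun j _ => hτ j) (Finset.mem_univ k)
          have := hτ k
          linarith [hsum0 ▸ h1]
        rw [Finset.sum_eq_zero fun k _ => by rw [hall k, zero_mul], h0', zero_mul]
      · have hJ := jensen_logb τ (fun k => p k * gain h q k v₀ / σ2) hτ
          (fun k => div_nonneg (mul_nonneg (hp k) (hg k)) hσ.le) (hτ₁def ▸ hpos)
        rw [← hτ₁def] at hJ
        have harg : (∑ k, τ k * (p k * gain h q k v₀ / σ2)) / τ₁
            = (∑ k, p' k * gain h q k v₀) / σ2 := by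
          rw [Finset.sum_div, Finset.sum_div]
          refine Finset.sum_congr rfl fun k _ => ?_
          rw [hp'def]
          ring
        rw [harg] at hJ
        exact hJ
    have hmul := mul_le_mul_of_nonneg_left key hB.le
    rw [← mul_assoc] at hmul
    linarith

lemma zero_mem_nset {K N : ℕ} (h : Fin K → ℂ) (q : Fin K → Fin N → ℂ)
    (B T C γ η P σ2 : ℝ) (hT : 0 < T) :
    (0:ℝ) ∈ NSet h q B T C γ η P σ2 := by
  refine ⟨fun _ => 1, 0, 0, fun _ => 0, fun _ => 0, fun n => by simp, le_refl 0, le_refl 0,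
    fun k => le_refl 0, fun k => le_refl 0, by simpa using hT.le,
    fun k => by simp, by simp⟩

/-- Extension of Theorem 1: `R_TDMA^{case1} = R_NOMA^{case1}`. -/
theorem RTDMA1_eq_RNOMA1 {K N : ℕ} (hK : 1 ≤ K) (hN : 1 ≤ N)
    (h : Fin K → ℂ) (q : Fin K → Fin N → ℂ) (B T C γ η P σ2 : ℝ)
    (hB : 0 < B) (hT : 0 < T) (hC : 0 < C) (hγ : 0 < γ)
    (hη : 0 < η) (hP : 0 < P) (hσ : 0 < σ2) :
    RTDMA1 h q B T C γ η P σ2 = RNOMA1 h q B T C γ η P σ2 := by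
  have hTeq : RTDMA1 h q B T C γ η P σ2 = sSup (TSet h q B T C γ η P σ2) := rfl
  have hNeq : RNOMA1 h q B T C γ η P σ2 = sSup (NSet h q B T C γ η P σ2) := rfl
  rw [hTeq, hNeq]
  have hsub := noma_subset_tdma h q B T C γ η P σ2 hσ
  have hdom := tdma_le_noma h q B T C γ η P σ2 hB hσ
  have hNne : (NSet h q B T C γ η P σ2).Nonempty := ⟨0, zero_mem_nset h q B T C γ η P σ2 hT⟩
  have hTne : (TSet h q B T C γ η P σ2).Nonempty := ⟨0, hsub (zero_mem_nset h q B T C γ η P σ2 hT)⟩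
  by_cases hbdd : BddAbove (NSet h q B T C γ η P σ2)
  · obtain ⟨M, hM⟩ := hbdd
    have hTbdd : BddAbove (TSet h q B T C γ η P σ2) := by
      refine ⟨M, fun r hr => ?_⟩
      obtain ⟨r', hr', hle⟩ := hdom r hr
      exact hle.trans (hM hr')
    apply le_antisymm
    · apply csSup_le hTne
      intro r hr
      obtain ⟨r', hr', hle⟩ := hdom r hr
      exact hle.trans (le_csSup ⟨M, hM⟩ hr')
    · exact csSup_le_csSup hTbdd hNne hsub
  · have hTbdd : ¬ BddAbove (TSet h q B T C γ η P σ2) := by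
      intro ⟨M, hM⟩
      exact hbdd ⟨M, fun r hr => hM (hsub hr)⟩
    rw [Real.sSup_of_not_bddAbove hTbdd, Real.sSup_of_not_bddAbove hbdd]
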